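/- Let Θ be a finite nonempty set and l, u : Θ → ℝ with 0 ≤ l(x) ≤ u(x) for all x, ∑_{x∈Θ} l(x) ≤ 1 ≤ ∑_{x∈Θ} u(x), and ∑_{x∈Θ}(u(x) − l(x)) > 0. Then the intersection probability p[(l,u)](x) = l(x) + β[(l,u)]·(u(x) − l(x)) is a probability distribution on Θ (nonnegative and summing to 1) and it is consistent with the interval system: l(x) ≤ p[(l,u)](x) ≤ u(x) for every x ∈ Θ. -/
import Mathlib


open Finset

/-- `β[(l,u)] = (1 - ∑ l) / ∑ (u - l)`. -/
noncomputable def intervalBeta {Θ : Type*} [Fintype Θ] (l u : Θ → ℝ) : ℝ :=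
  (1 - ∑ x : Θ, l x) / (∑ x : Θ, (u x - l x))

/-- The intersection probability `p[(l,u)](x) = l(x) + β[(l,u)]⬝(u(x) - l(x))`. -/
noncomputable def intersectionProb {Θ : Type*} [Fintype Θ] (l u : Θ → ℝ) (x : Θ) : ℝ :=
  l x + intervalBeta l u * (u x - l x)

/-- under the consistency conditions on the interval system `(l,u)`,
the intersection probability is a probability distribution on `Θ` and is consistent
with the interval system. -/
theorem intersectionProb_isProbability_and_consistent
    {Θ : Type*} [Fintype Θ] [Nonempty Θ] (l u : Θ → ℝ)
    (hl : ∀ x, 0 ≤ l x) (hlu : ∀ x, l x ≤ u x)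
    (hlsum : ∑ x : Θ, l x ≤ 1) (husum : 1 ≤ ∑ x : Θ, u x)
    (hpos : 0 < ∑ x : Θ, (u x - l x)) :
    (∀ x, 0 ≤ intersectionProb l u x) ∧
    (∑ x : Θ, intersectionProb l u x) = 1 ∧
    (∀ x, l x ≤ intersectionProb l u x ∧ intersectionProb l u x ≤ u x) := by
  have hβ0 : 0 ≤ intervalBeta l u := by
    apply div_nonneg (by linarith) hpos.le
  have hβ1 : intervalBeta l u ≤ 1 := by
    unfold intervalBeta
    rw [div_le_one hpos, Finset.sum_sub_distrib]
    linarith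
  have hcons : ∀ x, l x ≤ intersectionProb l u x ∧ intersectionProb l u x ≤ u x := by
    intro x
    have h := hlu x
    constructor
    · have := mul_nonneg hβ0 (by linarith : (0:ℝ) ≤ u x - l x)
      unfold intersectionProb; linarith
    · have := mul_le_of_le_one_left (by linarith : (0:ℝ) ≤ u x - l x) hβ1
      unfold intersectionProb; linarith
  refine ⟨fun x => le_trans (hl x) (hcons x).1, ?_, hcons⟩
  unfold intersectionProb intervalBeta
  rw [Finset.sum_add_distrib, ← Finset.mul_sum]
  rw [div_mul_cancel₀ _ hpos.ne']
  ring
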